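/- For d ≥ 1 and η ∈ (0, π/2), define f_d(η) = (∫₀^π sin^{d-1}(t) dt)^{-1} · ∫₀^{π/2-η} sin^{d-1}(t) dt. Then f_d is strictly decreasing in η, and for fixed η, f_d(η) is strictly decreasing in d (for real d ≥ 1). -/
import Mathlib


open Real

private lemma sinpow_cont {c : ℝ} (hc : 0 ≤ c) :
    Continuous fun t : ℝ => Real.sin t ^ c :=
  Real.continuous_sin.rpow_const fun _ => Or.inr hc

private lemma sinpow_int {c : ℝ} (a b : ℝ) (hc : 0 ≤ c) :
    IntervalIntegrable (fun t : ℝ => Real.sin t ^ c) MeasureTheory.volume a b :=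
  (sinpow_cont hc).intervalIntegrable a b

private lemma sinpow_pos {c a b : ℝ} (hc : 0 ≤ c) (h0 : 0 ≤ a) (hab : a < b)
    (hb : b ≤ Real.pi) : 0 < ∫ t in a..b, Real.sin t ^ c := by
  apply intervalIntegral.intervalIntegral_pos_of_pos_on (sinpow_int a b hc) _ hab
  intro t ht
  exact Real.rpow_pos_of_pos
    (Real.sin_pos_of_pos_of_lt_pi (lt_of_le_of_lt h0 ht.1) (lt_of_lt_of_le ht.2 hb)) c

private lemma sinpow_half (c : ℝ) :
    (∫ t in (Real.pi/2)..Real.pi, Real.sin t ^ c)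
      = ∫ t in (0:ℝ)..(Real.pi/2), Real.sin t ^ c := by
  have h := intervalIntegral.integral_comp_sub_left
      (fun t => Real.sin t ^ c) Real.pi (a := 0) (b := Real.pi/2)
  simp only [Real.sin_pi_sub, sub_zero] at h
  have h2 : Real.pi - Real.pi/2 = Real.pi/2 := by ring
  rw [h2] at h
  exact h.symm

private lemma sinpow_split {c a : ℝ} (hc : 0 ≤ c) :
    (∫ t in (0:ℝ)..Real.pi, Real.sin t ^ c)
      = 2 * (∫ t in (0:ℝ)..a, Real.sin t ^ c)
        + 2 * ∫ t in a..(Real.pi/2), Real.sin t ^ c := by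
  have h1 : (∫ t in (0:ℝ)..(Real.pi/2), Real.sin t ^ c)
      + (∫ t in (Real.pi/2)..Real.pi, Real.sin t ^ c)
      = ∫ t in (0:ℝ)..Real.pi, Real.sin t ^ c :=
    intervalIntegral.integral_add_adjacent_intervals (sinpow_int _ _ hc) (sinpow_int _ _ hc)
  have h2 : (∫ t in (0:ℝ)..a, Real.sin t ^ c)
      + (∫ t in a..(Real.pi/2), Real.sin t ^ c)
      = ∫ t in (0:ℝ)..(Real.pi/2), Real.sin t ^ c :=
    intervalIntegral.integral_add_adjacent_intervals (sinpow_int _ _ hc) (sinpow_int _ _ hc)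
  rw [← h1, sinpow_half, ← h2]; ring

/-- The normalized-cap function
`f_d(η) = (∫₀^π sin^{d-1})⁻¹ ∫₀^{π/2-η} sin^{d-1}` is strictly decreasing in
`η ∈ (0, π/2)` for each real `d ≥ 1`, and strictly decreasing in real `d ≥ 1`
for each fixed `η ∈ (0, π/2)`. -/
theorem f_strictAnti_in_eta_and_d :
    (∀ d : ℝ, 1 ≤ d →
      StrictAntiOn (fun η : ℝ =>
        (∫ t in (0:ℝ)..Real.pi, Real.sin t ^ (d - 1))⁻¹ *
          ∫ t in (0:ℝ)..(Real.pi / 2 - η), Real.sin t ^ (d - 1))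
        (Set.Ioo 0 (Real.pi / 2))) ∧
    (∀ η : ℝ, η ∈ Set.Ioo 0 (Real.pi / 2) →
      StrictAntiOn (fun d : ℝ =>
        (∫ t in (0:ℝ)..Real.pi, Real.sin t ^ (d - 1))⁻¹ *
          ∫ t in (0:ℝ)..(Real.pi / 2 - η), Real.sin t ^ (d - 1))
        (Set.Ici (1:ℝ))) := by
  have hpi := Real.pi_pos
  constructor
  · -- strictly decreasing in η
    intro d hd η₁ hη₁ η₂ hη₂ h12
    have hc : (0:ℝ) ≤ d - 1 := by linarith
    have hKpos : 0 < (∫ t in (0:ℝ)..Real.pi, Real.sin t ^ (d - 1))⁻¹ :=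
      inv_pos.2 (sinpow_pos hc le_rfl hpi le_rfl)
    have hb2pos : (0:ℝ) < Real.pi/2 - η₂ := by linarith [hη₂.2]
    have hbb : Real.pi/2 - η₂ < Real.pi/2 - η₁ := by linarith
    have hb1 : Real.pi/2 - η₁ ≤ Real.pi := by linarith [hη₁.1]
    have hadd : (∫ t in (0:ℝ)..(Real.pi/2 - η₂), Real.sin t ^ (d-1))
        + (∫ t in (Real.pi/2 - η₂)..(Real.pi/2 - η₁), Real.sin t ^ (d-1))
        = ∫ t in (0:ℝ)..(Real.pi/2 - η₁), Real.sin t ^ (d-1) :=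
      intervalIntegral.integral_add_adjacent_intervals (sinpow_int _ _ hc) (sinpow_int _ _ hc)
    have hmid : 0 < ∫ t in (Real.pi/2 - η₂)..(Real.pi/2 - η₁), Real.sin t ^ (d-1) :=
      sinpow_pos hc hb2pos.le hbb hb1
    have : (∫ t in (0:ℝ)..(Real.pi/2 - η₂), Real.sin t ^ (d-1))
        < ∫ t in (0:ℝ)..(Real.pi/2 - η₁), Real.sin t ^ (d-1) := by linarith
    exact mul_lt_mul_of_pos_left this hKpos
  · -- strictly decreasing in d
    intro η hη d₁ hd₁' d₂ hd₂' h12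
    have hd₁ : (1:ℝ) ≤ d₁ := hd₁'
    have hd₂ : (1:ℝ) ≤ d₂ := hd₂'
    obtain ⟨a, ha_def⟩ : ∃ x : ℝ, x = Real.pi/2 - η := ⟨_, rfl⟩
    have ha0 : 0 < a := by rw [ha_def]; linarith [hη.2]
    have haπ : a < Real.pi/2 := by rw [ha_def]; linarith [hη.1]
    have haπ' : a ≤ Real.pi := by linarith
    have hc1 : (0:ℝ) ≤ d₁ - 1 := by linarith
    have hc2 : (0:ℝ) < d₂ - 1 := by linarith
    have hc : (0:ℝ) < d₂ - d₁ := by linarith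
    have hfac : ∀ t ∈ Set.Icc (0:ℝ) Real.pi,
        Real.sin t ^ (d₂ - 1) = Real.sin t ^ (d₁ - 1) * Real.sin t ^ (d₂ - d₁) := by
      intro t ht
      have hs : 0 ≤ Real.sin t := Real.sin_nonneg_of_nonneg_of_le_pi ht.1 ht.2
      have he : d₂ - 1 = (d₁ - 1) + (d₂ - d₁) := by ring
      rw [he, Real.rpow_add' hs (by linarith)]
    have hcong : ∀ p q : ℝ, 0 ≤ p → q ≤ Real.pi → p ≤ q →
        (∫ t in p..q, Real.sin t ^ (d₂ - 1))
          = ∫ t in p..q, Real.sin t ^ (d₁ - 1) * Real.sin t ^ (d₂ - d₁) := by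
      intro p q hp hq hpq
      apply intervalIntegral.integral_congr
      intro t ht
      rw [Set.uIcc_of_le hpq] at ht
      exact hfac t ⟨le_trans hp ht.1, le_trans ht.2 hq⟩
    have hwg_cont : Continuous fun t : ℝ =>
        Real.sin t ^ (d₁ - 1) * Real.sin t ^ (d₂ - d₁) :=
      (sinpow_cont hc1).mul (sinpow_cont hc.le)
    obtain ⟨A1, hA1⟩ : ∃ x : ℝ, x = ∫ t in (0:ℝ)..a, Real.sin t ^ (d₁ - 1) := ⟨_, rfl⟩
    obtain ⟨B1, hB1⟩ : ∃ x : ℝ,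
        x = ∫ t in a..(Real.pi/2), Real.sin t ^ (d₁ - 1) := ⟨_, rfl⟩
    obtain ⟨A2, hA2⟩ : ∃ x : ℝ,
        x = ∫ t in (0:ℝ)..a, Real.sin t ^ (d₁ - 1) * Real.sin t ^ (d₂ - d₁) := ⟨_, rfl⟩
    obtain ⟨B2, hB2⟩ : ∃ x : ℝ,
        x = ∫ t in a..(Real.pi/2), Real.sin t ^ (d₁ - 1) * Real.sin t ^ (d₂ - d₁) := ⟨_, rfl⟩
    obtain ⟨γ, hγ⟩ : ∃ x : ℝ, x = Real.sin a ^ (d₂ - d₁) := ⟨_, rfl⟩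
    have hA1pos : 0 < A1 := hA1 ▸ sinpow_pos hc1 le_rfl ha0 haπ'
    have hB1pos : 0 < B1 := hB1 ▸ sinpow_pos hc1 ha0.le haπ (by linarith)
    have hA2pos : 0 < A2 := by
      rw [hA2, ← hcong 0 a le_rfl haπ' ha0.le]
      exact sinpow_pos hc2.le le_rfl ha0 haπ'
    have hB2pos : 0 < B2 := by
      rw [hB2, ← hcong a (Real.pi/2) ha0.le (by linarith) haπ.le]
      exact sinpow_pos hc2.le ha0.le haπ (by linarith)
    -- A2 < γ * A1
    have hkey1 : A2 < γ * A1 := by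
      have hpos : 0 < ∫ t in (0:ℝ)..a,
          (γ * Real.sin t ^ (d₁ - 1)
            - Real.sin t ^ (d₁ - 1) * Real.sin t ^ (d₂ - d₁)) := by
        apply intervalIntegral.intervalIntegral_pos_of_pos_on
        · exact ((show Continuous fun t : ℝ => γ * Real.sin t ^ (d₁ - 1) from continuous_const.mul (sinpow_cont hc1)).sub hwg_cont).intervalIntegrable 0 a
        · intro t ht
          have hsp : 0 < Real.sin t :=
            Real.sin_pos_of_pos_of_lt_pi ht.1 (by linarith [ht.2])
          have hwp : 0 < Real.sin t ^ (d₁ - 1) := Real.rpow_pos_of_pos hsp _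
          have hsin_lt : Real.sin t < Real.sin a :=
            Real.strictMonoOn_sin ⟨by linarith [ht.1], by linarith [ht.2]⟩
              ⟨by linarith, haπ.le⟩ ht.2
          have hglt : Real.sin t ^ (d₂ - d₁) < γ := by
            rw [hγ]; exact Real.rpow_lt_rpow hsp.le hsin_lt hc
          nlinarith
        · exact ha0
      have hcw : Continuous fun t : ℝ => γ * Real.sin t ^ (d₁ - 1) :=
        continuous_const.mul (sinpow_cont hc1)
      have hsub := intervalIntegral.integral_sub (μ := MeasureTheory.volume)
        (hcw.intervalIntegrable 0 a) (hwg_cont.intervalIntegrable 0 a)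
      rw [hsub, intervalIntegral.integral_const_mul] at hpos
      rw [hA2, hA1]; linarith
    -- γ * B1 ≤ B2
    have hkey2 : γ * B1 ≤ B2 := by
      have hnn : 0 ≤ ∫ t in a..(Real.pi/2),
          (Real.sin t ^ (d₁ - 1) * Real.sin t ^ (d₂ - d₁)
            - γ * Real.sin t ^ (d₁ - 1)) := by
        apply intervalIntegral.integral_nonneg haπ.le
        intro t ht
        have hsn : 0 ≤ Real.sin t :=
          Real.sin_nonneg_of_nonneg_of_le_pi (by linarith [ht.1]) (by linarith [ht.2])
        have hwn : 0 ≤ Real.sin t ^ (d₁ - 1) := Real.rpow_nonneg hsn _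
        have hsin_le : Real.sin a ≤ Real.sin t := by
          rcases eq_or_lt_of_le ht.1 with h | h
          · rw [h]
          · exact (Real.strictMonoOn_sin ⟨by linarith, haπ.le⟩
              ⟨by linarith [ht.1], by linarith [ht.2]⟩ h).le
        have hgle : γ ≤ Real.sin t ^ (d₂ - d₁) := by
          rw [hγ]
          exact Real.rpow_le_rpow
            (Real.sin_nonneg_of_nonneg_of_le_pi ha0.le haπ') hsin_le hc.le
        nlinarith
      have hcw : Continuous fun t : ℝ => γ * Real.sin t ^ (d₁ - 1) :=
        continuous_const.mul (sinpow_cont hc1)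
      have hsub := intervalIntegral.integral_sub (μ := MeasureTheory.volume)
        (hwg_cont.intervalIntegrable a (Real.pi/2))
        (hcw.intervalIntegrable a (Real.pi/2))
      rw [hsub, intervalIntegral.integral_const_mul] at hnn
      rw [hB2, hB1]; linarith
    -- denominators
    have hD1 : (∫ t in (0:ℝ)..Real.pi, Real.sin t ^ (d₁ - 1)) = 2*A1 + 2*B1 := by
      rw [hA1, hB1]; exact sinpow_split hc1
    have hD2 : (∫ t in (0:ℝ)..Real.pi, Real.sin t ^ (d₂ - 1)) = 2*A2 + 2*B2 := by
      rw [hA2, hB2, ← hcong 0 a le_rfl haπ' ha0.le,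
        ← hcong a (Real.pi/2) ha0.le (by linarith) haπ.le]
      exact sinpow_split hc2.le
    have hN2 : (∫ t in (0:ℝ)..a, Real.sin t ^ (d₂ - 1)) = A2 := by
      rw [hA2]; exact hcong 0 a le_rfl haπ' ha0.le
    have hN1 : (∫ t in (0:ℝ)..a, Real.sin t ^ (d₁ - 1)) = A1 := hA1.symm
    simp only
    rw [← ha_def, hD1, hD2, hN2, hN1]
    rw [inv_mul_eq_div, inv_mul_eq_div]
    rw [div_lt_div_iff₀ (by linarith) (by linarith)]
    nlinarith [mul_lt_mul_of_pos_right hkey1 hB1pos,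
      mul_le_mul_of_nonneg_left hkey2 hA1pos.le, mul_pos hA1pos hA2pos]
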